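/- Define H(w) = (f/2^w)·θ·exp(-n/(r·2^w)) for natural w ≥ 1, with real f, θ, r, n > 0. Let l be the smallest level with n/2^l ≤ 4r (so 2r < n/2^l ≤ 4r). Then for every w ≤ l-2, H(w+1)/H(w) ≥ e⁴/2 ≥ 27, and consequently Σ_{w=1}^{l-1} H(w) ≤ (27/26)·H(l-1). -/

import Mathlib

/-- Geometric decay of `H(w) = (f/2^w)·θ·exp(-n/(r·2^w))` below level `l`,
where `2r < n/2^l ≤ 4r`: for `1 ≤ w ≤ l-2`, `H(w+1)/H(w) ≥ e⁴/2 ≥ 27`, and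
`∑_{w=1}^{l-1} H(w) ≤ (27/26)·H(l-1)`. -/
theorem stmt_4 (f θ r n : ℝ) (hf : 0 < f) (hθ : 0 < θ) (hr : 0 < r) (hn : 0 < n)
    (H : ℕ → ℝ) (hH : ∀ w, H w = f / 2 ^ w * θ * Real.exp (-(n / (r * 2 ^ w))))
    (l : ℕ) (hl : 2 ≤ l) (h1 : 2 * r < n / 2 ^ l) (h2 : n / 2 ^ l ≤ 4 * r) :
    (∀ w : ℕ, 1 ≤ w → w + 2 ≤ l →
        (27 : ℝ) ≤ Real.exp 4 / 2 ∧ Real.exp 4 / 2 ≤ H (w + 1) / H w) ∧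
      ∑ w ∈ Finset.Icc 1 (l - 1), H w ≤ 27 / 26 * H (l - 1) := by
  have Hpos : ∀ w, 0 < H w := by
    intro w; rw [hH]; positivity
  have he54 : (54:ℝ) ≤ Real.exp 4 := by
    have h9 := Real.exp_one_gt_d9
    have h4 : Real.exp 4 = Real.exp 1 ^ 4 := by
      rw [← Real.exp_nat_mul]; norm_num
    have hp : (2.7182818283:ℝ)^4 ≤ (Real.exp 1)^4 :=
      pow_le_pow_left₀ (by norm_num) h9.le 4
    calc (54:ℝ) ≤ (2.7182818283:ℝ)^4 := by norm_num
      _ ≤ (Real.exp 1)^4 := hp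
      _ = Real.exp 4 := h4.symm
  have ratio : ∀ w : ℕ, 1 ≤ w → w + 2 ≤ l →
      H (w + 1) / H w = Real.exp (n / (r * 2 ^ (w+1))) / 2 ∧
      (4:ℝ) ≤ n / (r * 2 ^ (w+1)) := by
    intro w hw hwl
    constructor
    · have hHw : H w ≠ 0 := (Hpos w).ne'
      have hstep : H (w+1) = Real.exp (n / (r * 2 ^ (w+1))) / 2 * H w := by
        rw [hH, hH]
        have hd : (r:ℝ) * 2 ^ w ≠ 0 := by positivity
        have hd2 : (r:ℝ) * 2 ^ (w+1) ≠ 0 := by positivity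
        have hexp : -(n / (r * 2 ^ (w+1))) = n / (r * 2 ^ (w+1)) + -(n / (r * 2 ^ w)) := by
          field_simp
          ring
        rw [hexp, Real.exp_add, pow_succ]
        field_simp
      rw [hstep]
      field_simp
    · have h2w : (2:ℝ)^(w+1) ≤ 2^(l-1) := by
        apply pow_le_pow_right₀ (by norm_num)
        omega
      have hlrw : (2:ℝ)^l = 2^(l-1) * 2 := by
        rw [← pow_succ]
        congr 1
        omega
      have hpl : (0:ℝ) < 2^l := by positivity
      have hn4 : 2 * r * 2^l < n := (lt_div_iff₀ hpl).mp h1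
      have hn4' : 4 * r * 2^(w+1) ≤ n := by
        have : (0:ℝ) < 2^(l-1) := by positivity
        nlinarith [hr.le, h2w]
      rw [le_div_iff₀ (by positivity)]
      nlinarith
  have key : ∀ w : ℕ, 1 ≤ w → w + 2 ≤ l → 27 * H w ≤ H (w+1) := by
    intro w hw hwl
    obtain ⟨hq, hb⟩ := ratio w hw hwl
    have h1' : (27:ℝ) ≤ H (w+1) / H w := by
      rw [hq]
      have := Real.exp_le_exp.mpr hb
      linarith
    have := (le_div_iff₀ (Hpos w)).mp h1'
    linarith
  refine ⟨?_, ?_⟩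
  · intro w hw hwl
    obtain ⟨hq, hb⟩ := ratio w hw hwl
    refine ⟨by linarith, ?_⟩
    rw [hq]
    have := Real.exp_le_exp.mpr hb
    linarith
  · have aux : ∀ m : ℕ, 1 ≤ m → m ≤ l - 1 →
        ∑ w ∈ Finset.Icc 1 m, H w ≤ 27 / 26 * H m := by
      intro m
      induction m with
      | zero => intro h; omega
      | succ m ih =>
        intro _ hml
        rcases Nat.eq_zero_or_pos m with hm0 | hm1
        · subst hm0
          simp only [Finset.Icc_self, Finset.sum_singleton]
          nlinarith [Hpos 1]
        · have hml' : m ≤ l - 1 := by omega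
          have hkey : 27 * H m ≤ H (m+1) := key m hm1 (by omega)
          rw [Finset.sum_Icc_succ_top (by omega)]
          have := ih hm1 hml'
          nlinarith [Hpos m, Hpos (m+1)]
    exact aux (l-1) (by omega) le_rfl
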